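/- Let F be a field and let K, D, U be integers with 0 ≤ U ≤ D and U + D ≤ K − 2. Set a = gcd(K, D−U, U+1), u_a = (U+1)/a, K_a = K/a, Δ_a = (D−U)/a, N = K_a − Δ_a. Let L be a K_a × N matrix over F with rows L_s indexed by s ∈ ℤ/K_aℤ such that for every s ∈ ℤ/K_aℤ there exist w ∈ F^N and scalars b_1,…,b_{Δ_a} ∈ F with L·w = e_s + Σ_{t=1}^{Δ_a} b_t·e_{s+t}. For a message assignment x define the extended message symbols z_{s,i}(x) = Σ_{j=0}^{a−1} x_{ι(s)+j, i} for s ∈ ℤ/K_aℤ, i ∈ {1,…,u_a}. Then every receiver can recover its whole extended message vector: for all x, x' : ℤ/Kℤ → F^{u_a}, every s ∈ ℤ/K_aℤ and every k of the form k = ι(s)+r with r ∈ {0,…,a−1}, if Σ_t y_t(x)·L_t = Σ_t y_t(x')·L_t and x_m = x'_m for every m ∈ 𝒦_k, then z_{s,i}(x) = z_{s,i}(x') for every i ∈ {1,…,u_a}. -/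

import Mathlib

/-- `ι : ℤ/K_aℤ → ℤ/Kℤ`, `ι(t) = a·t` (well defined since `a ∣ K`). -/
def iotaMap (K Ka a : ℕ) (t : ZMod Ka) : ZMod K := ((a * t.val : ℕ) : ZMod K)

/-- `y_s(x) = Σ_{i=1}^{u_a} Σ_{j=0}^{a−1} x_{ι(s+1−i)+j, i}`, where `i : Fin ua`
stands for the index `i+1 ∈ {1,…,u_a}` (so `s + 1 - (i+1) = s - i`). -/
def ySym {F : Type*} [Field F] (K Ka a ua : ℕ) (x : ZMod K → Fin ua → F)
    (s : ZMod Ka) : F :=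
  ∑ i : Fin ua, ∑ j : Fin a,
    x (iotaMap K Ka a (s - (i.1 : ZMod Ka)) + (j.1 : ZMod K)) i

/-- Extended message symbol `z_{s,i}(x) = Σ_{j=0}^{a−1} x_{ι(s)+j, i}`
(`i : Fin ua` stands for `i+1 ∈ {1,…,u_a}`). -/
def zSym {F : Type*} [Field F] (K Ka a ua : ℕ) (x : ZMod K → Fin ua → F)
    (s : ZMod Ka) (i : Fin ua) : F :=
  ∑ j : Fin a, x (iotaMap K Ka a s + (j.1 : ZMod K)) i

lemma iota_int_shift (K Ka a : ℕ) [NeZero K] [NeZero Ka] (haK : a * Ka = K)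
    (t : ZMod Ka) (p : ℤ) :
    iotaMap K Ka a (t + (p : ZMod Ka)) = iotaMap K Ka a t + ((a * p : ℤ) : ZMod K) := by
  unfold iotaMap
  have h1 : (((t + (p:ZMod Ka)).val : ℤ)) ≡ (t.val : ℤ) + p [ZMOD (Ka:ℤ)] := by
    rw [← ZMod.intCast_eq_intCast_iff]
    push_cast
    rw [ZMod.natCast_val, ZMod.natCast_val]
    simp [ZMod.intCast_cast]
  have h2 : (Ka:ℤ) ∣ ((t.val : ℤ) + p) - ((t + (p:ZMod Ka)).val : ℤ) := h1.dvd
  have h3 : (K:ℤ) ∣ ((a:ℤ)*((t.val : ℤ) + p)) - (a:ℤ)*((t + (p:ZMod Ka)).val : ℤ) := by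
    rw [← haK]
    push_cast
    have := mul_dvd_mul_left (a:ℤ) h2
    convert this using 1
    · rfl
    · ring
  have h4 : ((( (a:ℤ)*((t + (p:ZMod Ka)).val : ℤ)) : ℤ) : ZMod K)
      = (((a:ℤ)*((t.val : ℤ) + p) : ℤ) : ZMod K) := by
    rw [ZMod.intCast_eq_intCast_iff]
    exact Int.modEq_iff_dvd.mpr h3
  push_cast at h4 ⊢
  rw [h4]
  ring

lemma code_relation {F : Type*} [Field F] {Ka N Δa : ℕ} [NeZero Ka]
    (L : Matrix (ZMod Ka) (Fin N) F)
    (Y : ZMod Ka → F) (hc : ∑ t : ZMod Ka, Y t • L t = 0)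
    (s' : ZMod Ka) (w : Fin N → F) (b : Fin Δa → F)
    (hw : L.mulVec w = (Pi.single s' 1 : ZMod Ka → F)
        + ∑ t : Fin Δa, b t • (Pi.single (s' + ((t.1+1:ℕ):ZMod Ka)) 1 : ZMod Ka → F)) :
    Y s' + ∑ t : Fin Δa, b t * Y (s' + ((t.1+1:ℕ):ZMod Ka)) = 0 := by
  have h := congrArg (fun v : Fin N → F => ∑ n : Fin N, v n * w n) hc
  simp only [Finset.sum_apply, Pi.smul_apply, smul_eq_mul, Pi.zero_apply,
    Finset.sum_const_zero, zero_mul] at h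
  simp only [Finset.sum_mul] at h
  rw [Finset.sum_comm] at h
  have h2 : ∑ t : ZMod Ka, Y t * (L.mulVec w t) = 0 := by
    rw [← h]
    congr 1; ext t
    rw [Matrix.mulVec, dotProduct, Finset.mul_sum]
    exact Finset.sum_congr rfl (fun n _ => by ring)
  rw [hw] at h2
  simp only [Pi.add_apply, Finset.sum_apply, Pi.smul_apply, smul_eq_mul,
    Pi.single_apply, mul_ite, mul_one, mul_zero, mul_add, Finset.sum_add_distrib,
    Finset.sum_ite_eq', Finset.mem_univ, if_true, Finset.mul_sum] at h2
  rw [← h2]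
  congr 1
  rw [Finset.sum_comm]
  exact Finset.sum_congr rfl (fun t _ => by
    simp [Finset.mul_sum, mul_ite, Finset.sum_ite_eq', mul_comm])

set_option maxHeartbeats 1000000 in
/-- Every receiver `R_k` with `k = ι(s) + r`, `r ∈ {0,…,a−1}`, can recover its whole
extended message vector `(z_{s,1},…,z_{s,u_a})` from the codeword
`Σ_t y_t(x)·L_t` and its side-information `𝒦_k`. -/
theorem suicp_sncs_extended_message_decodable
    (F : Type*) [Field F] (K D U : ℕ) (hUD : U ≤ D) (hK : U + D + 2 ≤ K)
    (a ua Ka Δa N : ℕ)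
    (ha : a = Nat.gcd K (Nat.gcd (D - U) (U + 1)))
    (hua : ua = (U + 1) / a) (hKa : Ka = K / a) (hΔa : Δa = (D - U) / a)
    (hN : N = Ka - Δa)
    [NeZero K] [NeZero Ka]
    (L : Matrix (ZMod Ka) (Fin N) F)
    (hAIR : ∀ s : ZMod Ka, ∃ (w : Fin N → F) (b : Fin Δa → F),
      L.mulVec w =
        (Pi.single s 1 : ZMod Ka → F) +
          ∑ t : Fin Δa,
            b t • (Pi.single (s + ((t.1 + 1 : ℕ) : ZMod Ka)) 1 : ZMod Ka → F))
    (x x' : ZMod K → Fin ua → F) (s : ZMod Ka) (r : ℕ) (hr : r < a) (k : ZMod K)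
    (hk : k = iotaMap K Ka a s + (r : ZMod K))
    (hcode : ∑ t : ZMod Ka, ySym K Ka a ua x t • L t
           = ∑ t : ZMod Ka, ySym K Ka a ua x' t • L t)
    (hback : ∀ d : ℕ, 1 ≤ d → d ≤ U → x (k - (d : ZMod K)) = x' (k - (d : ZMod K)))
    (hfwd : ∀ d : ℕ, 1 ≤ d → d ≤ D → x (k + (d : ZMod K)) = x' (k + (d : ZMod K))) :
    ∀ i : Fin ua, zSym K Ka a ua x s i = zSym K Ka a ua x' s i := by
  -- basic divisibility facts
  have haK0 : a ∣ K := ha ▸ Nat.gcd_dvd_left _ _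
  have haU0 : a ∣ U + 1 := ha ▸ dvd_trans (Nat.gcd_dvd_right _ _) (Nat.gcd_dvd_right _ _)
  have haΔ0 : a ∣ D - U := ha ▸ dvd_trans (Nat.gcd_dvd_right _ _) (Nat.gcd_dvd_left _ _)
  have haK : a * Ka = K := by rw [hKa]; exact Nat.mul_div_cancel' haK0
  have haU : a * ua = U + 1 := by rw [hua]; exact Nat.mul_div_cancel' haU0
  have haΔ : a * Δa = D - U := by rw [hΔa]; exact Nat.mul_div_cancel' haΔ0
  have ha1 : 1 ≤ a := by
    rcases Nat.eq_zero_or_pos a with h | h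
    · exfalso; rw [h] at haU; omega
    · exact h
  have hua1 : 1 ≤ ua := by
    rcases Nat.eq_zero_or_pos ua with h | h
    · exfalso; rw [h] at haU; omega
    · exact h
  have haU' : a ≤ U + 1 := by
    calc a = a * 1 := (mul_one a).symm
    _ ≤ a * ua := Nat.mul_le_mul_left a hua1
    _ = U + 1 := haU
  have haUZ : (a:ℤ) * ua = (U:ℤ) + 1 := by exact_mod_cast haU
  have haΔZ : (a:ℤ) * Δa = (D:ℤ) - U := by
    rw [← Nat.cast_sub hUD, ← haΔ]; push_cast; ring
  have hks : iotaMap K Ka a s = k - (r : ZMod K) := by rw [hk]; ring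
  -- side-information, integer-offset form
  have hδ : ∀ e : ℤ, e ≠ 0 → -(U:ℤ) ≤ e → e ≤ (D:ℤ) →
      x (k + (e : ZMod K)) = x' (k + (e : ZMod K)) := by
    intro e he h1 h2
    rcases lt_or_gt_of_ne he with hlt | hgt
    · set d : ℕ := (-e).toNat with hd
      have he' : e = -(d:ℤ) := by omega
      have hcast : k + ((e:ℤ) : ZMod K) = k - ((d:ℕ) : ZMod K) := by
        rw [he']; push_cast; ring
      rw [hcast]
      exact hback d (by omega) (by omega)
    · set d : ℕ := e.toNat with hd
      have he' : e = (d:ℤ) := by omega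
      have hcast : k + ((e:ℤ) : ZMod K) = k + ((d:ℕ) : ZMod K) := by
        rw [he']; push_cast; ring
      rw [hcast]
      exact hfwd d (by omega) (by omega)
  -- z-symbol vanishing on blocks fully inside the side information
  have hZ : ∀ (p : ℤ) (i : Fin ua), p ≠ 0 → -(U:ℤ) ≤ (a:ℤ)*p - r →
      (a:ℤ)*p + a - 1 - r ≤ (D:ℤ) →
      zSym K Ka a ua x (s + (p : ZMod Ka)) i = zSym K Ka a ua x' (s + (p : ZMod Ka)) i := by
    intro p i hp h1 h2
    unfold zSym
    apply Finset.sum_congr rfl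
    intro j _
    have hpos : iotaMap K Ka a (s + (p:ZMod Ka)) + ((j.1:ℕ) : ZMod K)
        = k + (((a:ℤ)*p + j.1 - r : ℤ) : ZMod K) := by
      rw [iota_int_shift K Ka a haK, hks]; push_cast; ring
    have hj := j.isLt
    have hne : (a:ℤ)*p + j.1 - r ≠ 0 := by
      rcases hp.lt_or_gt with hneg | hpos'
      · have : (a:ℤ)*p ≤ a * (-1) := by
          apply mul_le_mul_of_nonneg_left (by omega) (by positivity)
        have hj' : (j.1:ℤ) < a := by exact_mod_cast hj
        nlinarith
      · have : (a:ℤ)*1 ≤ a * p := by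
          apply mul_le_mul_of_nonneg_left (by omega) (by positivity)
        have hr' : (r:ℤ) < a := by exact_mod_cast hr
        nlinarith
    have hb1 : -(U:ℤ) ≤ (a:ℤ)*p + j.1 - r := by
      have : (0:ℤ) ≤ j.1 := by positivity
      linarith
    have hb2 : (a:ℤ)*p + j.1 - r ≤ (D:ℤ) := by
      have hj' : (j.1:ℤ) ≤ (a:ℤ) - 1 := by exact_mod_cast Nat.lt_iff_le_pred ha1 |>.mp hj
      linarith
    rw [hpos, hδ _ hne hb1 hb2]
  -- the block of the receiver itself
  have hZ0 : ∀ i : Fin ua,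
      zSym K Ka a ua x s i - zSym K Ka a ua x' s i = x k i - x' k i := by
    intro i
    unfold zSym
    rw [← Finset.sum_sub_distrib]
    rw [Finset.sum_eq_single (⟨r, hr⟩ : Fin a)]
    · have : iotaMap K Ka a s + (((⟨r, hr⟩ : Fin a).1 : ℕ) : ZMod K) = k := hk.symm
      rw [this]
    · intro j _ hj
      have hjr : j.1 ≠ r := fun h => hj (Fin.ext h)
      have hj := j.isLt
      have hpos : iotaMap K Ka a s + ((j.1:ℕ) : ZMod K)
          = k + (((j.1:ℤ) - r : ℤ) : ZMod K) := by
        rw [hks]; push_cast; ring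
      rw [hpos, hδ ((j.1:ℤ) - r) (by omega) (by omega) (by omega), sub_self]
    · intro h; exact absurd (Finset.mem_univ _) h
  -- value of the y-difference at shifted positions
  have hY : ∀ m : ℕ, m ≤ ua - 1 + Δa →
      ySym K Ka a ua x (s + (m : ZMod Ka)) - ySym K Ka a ua x' (s + (m : ZMod Ka))
      = if h : m < ua then x k ⟨m, h⟩ - x' k ⟨m, h⟩ else 0 := by
    intro m hm
    have hmZ : (a:ℤ) * m ≤ (D:ℤ) + 1 - a := by
      have h1 : (m:ℤ) ≤ (ua:ℤ) - 1 + Δa := by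
        have : (m:ℕ) ≤ ua - 1 + Δa := hm
        omega
      have h2 : (a:ℤ) * m ≤ (a:ℤ) * ((ua:ℤ) - 1 + Δa) :=
        mul_le_mul_of_nonneg_left h1 (by positivity)
      have h3 : (a:ℤ) * ((ua:ℤ) - 1 + Δa) = (a:ℤ)*ua + (a:ℤ)*Δa - a := by ring
      rw [h3, haUZ, haΔZ] at h2
      linarith
    have hstep : ∀ i : Fin ua, i.1 ≠ m →
        zSym K Ka a ua x ((s + (m : ZMod Ka)) - (i.1 : ZMod Ka)) i
          - zSym K Ka a ua x' ((s + (m : ZMod Ka)) - (i.1 : ZMod Ka)) i = 0 := by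
      intro i hi
      have hiZ : (a:ℤ) * i.1 ≤ (U:ℤ) + 1 - a := by
        have h1 : (i.1:ℤ) ≤ (ua:ℤ) - 1 := by
          have := i.isLt; omega
        have h2 : (a:ℤ) * i.1 ≤ (a:ℤ) * ((ua:ℤ) - 1) :=
          mul_le_mul_of_nonneg_left h1 (by positivity)
        have h3 : (a:ℤ) * ((ua:ℤ) - 1) = (a:ℤ)*ua - a := by ring
        rw [h3, haUZ] at h2
        linarith
      have hcast : (s + ((m:ℕ) : ZMod Ka)) - ((i.1:ℕ) : ZMod Ka)
          = s + ((((m:ℤ) - i.1) : ℤ) : ZMod Ka) := by push_cast; ring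
      rw [hcast, sub_eq_zero]
      have hexp : (a:ℤ) * ((m:ℤ) - i.1) = (a:ℤ)*m - (a:ℤ)*i.1 := by ring
      apply hZ ((m:ℤ) - i.1) i
      · intro h; apply hi; omega
      · have h0 : (0:ℤ) ≤ (a:ℤ)*m := by positivity
        have hr' : (r:ℤ) ≤ (a:ℤ) - 1 := by exact_mod_cast Nat.lt_iff_le_pred ha1 |>.mp hr
        rw [hexp]; linarith
      · have h0 : (0:ℤ) ≤ (a:ℤ)*i.1 := by positivity
        rw [hexp]; linarith
    have hysum : ∀ (xx : ZMod K → Fin ua → F) (t : ZMod Ka),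
        ySym K Ka a ua xx t = ∑ i : Fin ua, zSym K Ka a ua xx (t - (i.1 : ZMod Ka)) i :=
      fun xx t => rfl
    rw [hysum, hysum, ← Finset.sum_sub_distrib]
    by_cases h : m < ua
    · rw [dif_pos h, Finset.sum_eq_single (⟨m, h⟩ : Fin ua)]
      · have : (s + ((m:ℕ) : ZMod Ka)) - (((⟨m, h⟩ : Fin ua).1 : ℕ) : ZMod Ka) = s := by
          simp
        rw [this]; exact hZ0 ⟨m, h⟩
      · intro i _ hi
        exact hstep i (fun hh => hi (Fin.ext hh))
      · intro hh; exact absurd (Finset.mem_univ _) hh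
    · rw [dif_neg h]
      apply Finset.sum_eq_zero
      intro i _
      exact hstep i (by have := i.isLt; omega)
  -- the code condition as a difference
  have hc0 : ∑ t : ZMod Ka,
      (ySym K Ka a ua x t - ySym K Ka a ua x' t) • L t = 0 := by
    have h := sub_eq_zero.mpr hcode
    rw [← Finset.sum_sub_distrib] at h
    rw [← h]
    exact Finset.sum_congr rfl (fun t _ => by rw [sub_smul])
  -- downward induction on the component index
  have main : ∀ c : ℕ, ∀ i : Fin ua, ua ≤ i.1 + c → x k i = x' k i := by
    intro c
    induction c with
    | zero => intro i hi; exact absurd hi (by have := i.isLt; omega)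
    | succ c ih =>
      intro i hi
      obtain ⟨w, b, hw⟩ := hAIR (s + (i.1 : ZMod Ka))
      have hrel := code_relation L
        (fun t => ySym K Ka a ua x t - ySym K Ka a ua x' t) hc0 _ w b hw
      have h1 : ySym K Ka a ua x (s + (i.1 : ZMod Ka))
          - ySym K Ka a ua x' (s + (i.1 : ZMod Ka)) = x k i - x' k i := by
        have h := hY i.1 (by have := i.isLt; omega)
        rw [dif_pos i.isLt] at h
        simpa using h
      have h2 : ∀ t : Fin Δa,
          ySym K Ka a ua x (s + (i.1 : ZMod Ka) + ((t.1 + 1 : ℕ) : ZMod Ka))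
          - ySym K Ka a ua x' (s + (i.1 : ZMod Ka) + ((t.1 + 1 : ℕ) : ZMod Ka)) = 0 := by
        intro t
        have hcast : s + (i.1 : ZMod Ka) + ((t.1 + 1 : ℕ) : ZMod Ka)
            = s + ((i.1 + t.1 + 1 : ℕ) : ZMod Ka) := by push_cast; ring
        rw [hcast]
        have hmm : i.1 + t.1 + 1 ≤ ua - 1 + Δa := by
          have := i.isLt; have := t.isLt; omega
        rw [hY _ hmm]
        by_cases hlt : i.1 + t.1 + 1 < ua
        · rw [dif_pos hlt, ih ⟨_, hlt⟩ (by simp only []; omega), sub_self]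
        · rw [dif_neg hlt]
      rw [h1] at hrel
      have h3 : ∑ t : Fin Δa, b t *
          (ySym K Ka a ua x (s + (i.1 : ZMod Ka) + ((t.1 + 1 : ℕ) : ZMod Ka))
          - ySym K Ka a ua x' (s + (i.1 : ZMod Ka) + ((t.1 + 1 : ℕ) : ZMod Ka))) = 0 :=
        Finset.sum_eq_zero (fun t _ => by rw [h2 t, mul_zero])
      rw [h3, add_zero] at hrel
      exact sub_eq_zero.mp hrel
  intro i0
  have h := hZ0 i0
  rw [main ua i0 (by have := i0.isLt; omega), sub_self] at h
  exact sub_eq_zero.mp h
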